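/- Let 1 < p ≤ 2. There exists a constant c(p) > 0 such that for every M ≥ 1 and every X ∈ ℝ: |1+X|^p − 1 − pX ≥ c(p) M^{p-2} X² if |X| ≤ M, and |1+X|^p − 1 − pX ≥ c(p)|X|^p if |X| ≥ M. -/

import Mathlib

open Real Set

-- tangent line inequality for rpow
lemma tangent_rpow {p : ℝ} (hp : 1 ≤ p) {a b : ℝ} (ha : 0 ≤ a) (hb : 0 < b) :
    b ^ p + p * b ^ (p - 1) * (a - b) ≤ a ^ p := by
  have hs : -1 ≤ a / b - 1 := by
    have : 0 ≤ a / b := div_nonneg ha hb.le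
    linarith
  have key := one_add_mul_self_le_rpow_one_add hs hp
  rw [add_sub_cancel] at key
  have h2 : (a / b) ^ p = a ^ p / b ^ p := Real.div_rpow ha hb.le p
  rw [h2] at key
  have hbp : 0 < b ^ p := rpow_pos_of_pos hb p
  have key2 := (le_div_iff₀ hbp).mp key
  have hb1 : b ^ p = b ^ (p - 1) * b := by
    rw [← Real.rpow_add_one hb.ne' (p - 1)]; ring_nf
  have heq : (1 + p * (a / b - 1)) * b ^ p = b ^ p + p * b ^ (p - 1) * (a - b) := by
    rw [hb1]; field_simp
  linarith [heq ▸ key2]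

-- quantitative lower bound: (1+t)^(p-1) - 1 ≥ (p-1) t / (1+t)
lemma ratio_rpow {p : ℝ} (hp1 : 1 < p) (hp2 : p ≤ 2) {t : ℝ} (ht : 0 ≤ t) :
    1 + (p - 1) * t / (1 + t) ≤ (1 + t) ^ (p - 1) := by
  have h1t : (0:ℝ) < 1 + t := by linarith
  have hD : (0:ℝ) < 1 + (2 - p) * t := by nlinarith
  have hbern : (1 + t) ^ (2 - p) ≤ 1 + (2 - p) * t :=
    rpow_one_add_le_one_add_mul_self (by linarith) (by linarith) (by linarith)
  have hpos : (0:ℝ) < (1 + t) ^ (2 - p) := rpow_pos_of_pos h1t _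
  have hsplit : (1 + t) ^ (p - 1) * (1 + t) ^ (2 - p) = 1 + t := by
    rw [← Real.rpow_add h1t]
    norm_num
  have h2 : (1 + t) / (1 + (2 - p) * t) ≤ (1 + t) ^ (p - 1) := by
    rw [div_le_iff₀ hD]
    calc 1 + t = (1 + t) ^ (p - 1) * (1 + t) ^ (2 - p) := hsplit.symm
    _ ≤ (1 + t) ^ (p - 1) * (1 + (2 - p) * t) := by
        exact mul_le_mul_of_nonneg_left hbern (rpow_nonneg h1t.le _)
  refine le_trans ?_ h2
  rw [← sub_nonneg]
  have heq : (1 + t) / (1 + (2 - p) * t) - (1 + (p - 1) * t / (1 + t))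
      = ((p - 1) * t) ^ 2 / ((1 + (2 - p) * t) * (1 + t)) := by
    rw [one_add_div h1t.ne', div_sub_div _ _ hD.ne' h1t.ne']
    ring
  rw [heq]
  positivity

-- core bound valid for X ≥ -1
lemma core_bound {p : ℝ} (hp1 : 1 < p) {X : ℝ} (hX : -1 ≤ X) :
    p * (X / 2) * ((1 + X / 2) ^ (p - 1) - 1) ≤ (1 + X) ^ p - 1 - p * X := by
  have hb : (0:ℝ) < 1 + X / 2 := by linarith
  have ha : (0:ℝ) ≤ 1 + X := by linarith
  have htan := tangent_rpow hp1.le ha hb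
  have hbern : 1 + p * (X / 2) ≤ (1 + X / 2) ^ p :=
    one_add_mul_self_le_rpow_one_add (by linarith) hp1.le
  have : (1 + X) - (1 + X / 2) = X / 2 := by ring
  rw [this] at htan
  nlinarith [htan, hbern]

lemma small_pos {p : ℝ} (hp1 : 1 < p) (hp2 : p ≤ 2) {X : ℝ} (hX0 : 0 ≤ X) (hX1 : X ≤ 1) :
    p * (p - 1) / 6 * X ^ 2 ≤ (1 + X) ^ p - 1 - p * X := by
  have hc := core_bound hp1 (by linarith : (-1:ℝ) ≤ X)
  have hr := ratio_rpow hp1 hp2 (by linarith : (0:ℝ) ≤ X / 2)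
  have h1t : (0:ℝ) < 1 + X / 2 := by linarith
  have h3 : (p - 1) * X / 3 ≤ (p - 1) * (X / 2) / (1 + X / 2) := by
    rw [div_le_div_iff₀ (by norm_num) h1t]
    nlinarith [mul_nonneg (mul_nonneg (by linarith : (0:ℝ) ≤ p - 1) hX0)
      (by linarith : (0:ℝ) ≤ 1 - X)]
  have h4 : (p - 1) * X / 3 ≤ (1 + X / 2) ^ (p - 1) - 1 := by linarith
  have h5 := mul_le_mul_of_nonneg_left h4 (by positivity : (0:ℝ) ≤ p * (X / 2))
  clear h3 hr
  nlinarith [hc, h5]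

lemma small_neg' {p : ℝ} (hp1 : 1 < p) (hp2 : p ≤ 2) {X : ℝ} (hX0 : -1 ≤ X) (hX1 : X ≤ 0) :
    p * (p - 1) / 4 * X ^ 2 ≤ (1 + X) ^ p - 1 - p * X := by
  have hc := core_bound hp1 hX0
  have hbern : (1 + X / 2) ^ (p - 1) ≤ 1 + (p - 1) * (X / 2) :=
    rpow_one_add_le_one_add_mul_self (by linarith) (by linarith) (by linarith)
  have h4 : (1 + X / 2) ^ (p - 1) - 1 ≤ (p - 1) * (X / 2) := by linarith
  have h5 := mul_le_mul_of_nonpos_left h4 (by nlinarith : p * (X / 2) ≤ 0)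
  nlinarith [hc, h5]

lemma big_pos {p : ℝ} (hp1 : 1 < p) (hp2 : p ≤ 2) {X : ℝ} (hX : 1 ≤ X) :
    p * (p - 1) / 24 * X ^ p ≤ (1 + X) ^ p - 1 - p * X := by
  have hXpos : (0:ℝ) < X := by linarith
  have hc := core_bound hp1 (by linarith : (-1:ℝ) ≤ X)
  have h1t : (0:ℝ) < 1 + X / 2 := by linarith
  have hXp_pos : (0:ℝ) < X ^ p := rpow_pos_of_pos hXpos p
  have h2p : (2:ℝ) ^ p ≤ 4 := by
    calc (2:ℝ) ^ p ≤ (2:ℝ) ^ (2:ℝ) := rpow_le_rpow_of_exponent_le one_le_two hp2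
    _ = 4 := by rw [show (2:ℝ) = ((2:ℕ):ℝ) by norm_num, rpow_natCast]; norm_num
  by_cases hbig : (2:ℝ) ≤ (1 + X / 2) ^ (p - 1)
  · -- large X case
    have hXh : (X / 2) ^ (p - 1) ≤ (1 + X / 2) ^ (p - 1) :=
      rpow_le_rpow (by linarith) (by linarith) (by linarith)
    have hsplit : (X / 2) ^ (p - 1) * (X / 2) = (X / 2) ^ p := by
      rw [← Real.rpow_add_one (by positivity : (X:ℝ)/2 ≠ 0) (p - 1)]; ring_nf
    have hdiv : (X / 2) ^ p = X ^ p / 2 ^ p := Real.div_rpow hXpos.le (by norm_num) p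
    have hq : X ^ p / 8 ≤ (X / 2) ^ p := by
      rw [hdiv, div_le_div_iff₀ (by norm_num) (by positivity)]
      nlinarith [hXp_pos]
    have h5 : p * (X / 2) * ((X / 2) ^ (p - 1) / 2) ≤ p * (X / 2) * ((1 + X / 2) ^ (p - 1) - 1) := by
      apply mul_le_mul_of_nonneg_left _ (by positivity)
      linarith
    have h6 : p * (X / 2) * ((X / 2) ^ (p - 1) / 2) = p * ((X / 2) ^ p) / 2 := by
      rw [← hsplit]; ring
    have h7 := mul_le_mul_of_nonneg_left hq (by positivity : (0:ℝ) ≤ p)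
    nlinarith [hc, h5, h6, h7, hXp_pos,
      mul_nonneg (mul_nonneg (by linarith : (0:ℝ) ≤ p) hXp_pos.le)
        (by linarith : (0:ℝ) ≤ 5 - 2 * p)]
  · -- moderate X case: X^(p-1) ≤ 4, so X^p ≤ 4 X
    push_neg at hbig
    have hp1' : (0:ℝ) < p - 1 := by linarith
    have hpow2 : ((2:ℝ) ^ (1 / (p - 1))) ^ (p - 1) = 2 := by
      rw [← Real.rpow_mul (by norm_num : (0:ℝ) ≤ 2), one_div_mul_cancel hp1'.ne', rpow_one]
    have hlt : 1 + X / 2 < 2 ^ (1 / (p - 1)) := by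
      by_contra hcon
      push_neg at hcon
      have h10 : ((2:ℝ) ^ (1 / (p - 1))) ^ (p - 1) ≤ (1 + X / 2) ^ (p - 1) :=
        rpow_le_rpow (by positivity) hcon (by linarith)
      rw [hpow2] at h10
      linarith
    have hXp1 : X ^ (p - 1) ≤ 4 := by
      have hb1 : X ≤ 2 * 2 ^ (1 / (p - 1)) := by
        have : (1:ℝ) ≤ 2 ^ (1 / (p - 1)) := Real.one_le_rpow one_le_two (by positivity)
        linarith
      calc X ^ (p - 1) ≤ (2 * 2 ^ (1 / (p - 1))) ^ (p - 1) :=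
            rpow_le_rpow hXpos.le hb1 (by linarith)
      _ = 2 ^ (p - 1) * ((2 ^ (1 / (p - 1))) ^ (p - 1)) :=
            Real.mul_rpow (by norm_num) (by positivity)
      _ = 2 ^ (p - 1) * 2 := by rw [hpow2]
      _ ≤ 2 * 2 := by
            have : (2:ℝ) ^ (p - 1) ≤ 2 ^ (1:ℝ) := rpow_le_rpow_of_exponent_le one_le_two (by linarith)
            rw [rpow_one] at this; linarith
      _ = 4 := by norm_num
    have hXp4 : X ^ p ≤ 4 * X := by
      have : X ^ p = X ^ (p - 1) * X := by
        rw [← Real.rpow_add_one hXpos.ne' (p - 1)]; ring_nf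
      rw [this]
      nlinarith
    have hr := ratio_rpow hp1 hp2 (by linarith : (0:ℝ) ≤ X / 2)
    have h3 : (p - 1) / 3 ≤ (p - 1) * (X / 2) / (1 + X / 2) := by
      rw [div_le_div_iff₀ (by norm_num) h1t]
      nlinarith [mul_nonneg (by linarith : (0:ℝ) ≤ p - 1) (by linarith : (0:ℝ) ≤ X - 1)]
    have h4 : (p - 1) / 3 ≤ (1 + X / 2) ^ (p - 1) - 1 := by linarith
    have h5 := mul_le_mul_of_nonneg_left h4 (by positivity : (0:ℝ) ≤ p * (X / 2))
    clear h3 hr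
    nlinarith [hc, h5, mul_le_mul_of_nonneg_left hXp4 (by positivity : (0:ℝ) ≤ p * (p - 1) / 24)]

lemma big_neg {p : ℝ} (hp1 : 1 < p) (hp2 : p ≤ 2) {Y : ℝ} (hY : 1 ≤ Y) :
    (p - 1) / 4 * Y ^ p ≤ (Y - 1) ^ p - 1 + p * Y := by
  have hYpos : (0:ℝ) < Y := by linarith
  have hYp_pos : (0:ℝ) < Y ^ p := rpow_pos_of_pos hYpos p
  have hnn : (0:ℝ) ≤ (Y - 1) ^ p := rpow_nonneg (by linarith) p
  rcases le_total Y 2 with h2 | h2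
  · -- 1 ≤ Y ≤ 2 : Y^p ≤ 2 Y
    have hY2 : Y ^ p ≤ 2 * Y := by
      have hs : Y ^ p = Y ^ (p - 1) * Y := by
        rw [← Real.rpow_add_one hYpos.ne' (p - 1)]; ring_nf
      have h1 : Y ^ (p - 1) ≤ Y ^ (1:ℝ) := rpow_le_rpow_of_exponent_le hY (by linarith)
      rw [rpow_one] at h1
      rw [hs]
      nlinarith
    nlinarith [mul_le_mul_of_nonneg_left hY2 (by linarith : (0:ℝ) ≤ (p - 1) / 4)]
  · -- 2 ≤ Y : (Y-1)^p ≥ (Y/2)^p = Y^p / 2^p ≥ Y^p/4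
    have h2p : (2:ℝ) ^ p ≤ 4 := by
      calc (2:ℝ) ^ p ≤ (2:ℝ) ^ (2:ℝ) := rpow_le_rpow_of_exponent_le one_le_two hp2
      _ = 4 := by rw [show (2:ℝ) = ((2:ℕ):ℝ) by norm_num, rpow_natCast]; norm_num
    have hhalf : (Y / 2) ^ p ≤ (Y - 1) ^ p :=
      rpow_le_rpow (by linarith) (by linarith) (by linarith)
    have hdiv : (Y / 2) ^ p = Y ^ p / 2 ^ p := Real.div_rpow hYpos.le (by norm_num) p
    have hq : Y ^ p / 4 ≤ (Y / 2) ^ p := by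
      rw [hdiv, div_le_div_iff₀ (by norm_num) (by positivity)]
      nlinarith [hYp_pos]
    nlinarith [hYp_pos, mul_nonneg (by linarith : (0:ℝ) ≤ 2 - p) hYp_pos.le]

lemma unified {p : ℝ} (hp1 : 1 < p) (hp2 : p ≤ 2) (X : ℝ) :
    (|X| ≤ 1 → p * (p - 1) / 24 * X ^ 2 ≤ |1 + X| ^ p - 1 - p * X) ∧
    (1 ≤ |X| → p * (p - 1) / 24 * |X| ^ p ≤ |1 + X| ^ p - 1 - p * X) := by
  constructor
  · intro hX
    rw [abs_le] at hX
    rw [abs_of_nonneg (by linarith : (0:ℝ) ≤ 1 + X)]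
    rcases le_total 0 X with h | h
    · nlinarith [small_pos hp1 hp2 h hX.2,
        mul_nonneg (mul_nonneg (by linarith : (0:ℝ) ≤ p) (by linarith : (0:ℝ) ≤ p - 1)) (sq_nonneg X)]
    · nlinarith [small_neg' hp1 hp2 hX.1 h,
        mul_nonneg (mul_nonneg (by linarith : (0:ℝ) ≤ p) (by linarith : (0:ℝ) ≤ p - 1)) (sq_nonneg X)]
  · intro hX
    have hXp_nn : (0:ℝ) ≤ |X| ^ p := rpow_nonneg (abs_nonneg X) p
    rcases le_total 0 X with h | h
    · rw [abs_of_nonneg h] at hX ⊢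
      rw [abs_of_nonneg (by linarith : (0:ℝ) ≤ 1 + X)]
      exact big_pos hp1 hp2 hX
    · rw [abs_of_nonpos h] at hX ⊢
      have hX1 : X ≤ -1 := by linarith
      rw [abs_of_nonpos (by linarith : 1 + X ≤ 0)]
      have hb := big_neg hp1 hp2 hX
      have he : (-X - 1) ^ p = (-(1 + X)) ^ p := by ring_nf
      have hXp_nn2 : (0:ℝ) ≤ (-X) ^ p := rpow_nonneg (by linarith) p
      nlinarith [hb, mul_nonneg (mul_nonneg (by linarith : (0:ℝ) ≤ p - 1)
        (by linarith : (0:ℝ) ≤ 6 - p)) hXp_nn2]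

/-- Fundamental inequality for `1 < p ≤ 2`. -/
theorem fundamental_ineq_p_le_two (p : ℝ) (hp1 : 1 < p) (hp2 : p ≤ 2) :
    ∃ c > (0:ℝ), ∀ M : ℝ, 1 ≤ M → ∀ X : ℝ,
      (|X| ≤ M → |1 + X| ^ p - 1 - p * X ≥ c * M ^ (p - 2) * X ^ 2) ∧
      (M ≤ |X| → |1 + X| ^ p - 1 - p * X ≥ c * |X| ^ p) := by
  refine ⟨p * (p - 1) / 24, by nlinarith, fun M hM X => ?_⟩
  have hc : (0:ℝ) < p * (p - 1) / 24 := by nlinarith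
  obtain ⟨h1, h2⟩ := unified hp1 hp2 X
  have hMpos : (0:ℝ) < M := by linarith
  constructor
  · intro hXM
    rcases le_total (|X|) 1 with hX1 | hX1
    · -- |X| ≤ 1 : use M^(p-2) ≤ 1
      have hM1 : M ^ (p - 2) ≤ 1 := rpow_le_one_of_one_le_of_nonpos hM (by linarith)
      have hM0 : (0:ℝ) ≤ M ^ (p - 2) := rpow_nonneg hMpos.le _
      have := h1 hX1
      nlinarith [mul_nonneg hc.le (sq_nonneg X)]
    · -- 1 ≤ |X| ≤ M : M^(p-2) * X^2 ≤ |X|^p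
      have hXpos : (0:ℝ) < |X| := by linarith
      have key : M ^ (p - 2) * X ^ 2 ≤ |X| ^ p := by
        have hmono : M ^ (p - 2) ≤ |X| ^ (p - 2) :=
          Real.rpow_le_rpow_of_nonpos hXpos hXM (by linarith)
        have hsplit : |X| ^ p = |X| ^ (p - 2) * X ^ 2 := by
          rw [← sq_abs X, ← Real.rpow_natCast |X| 2, ← Real.rpow_add hXpos]
          norm_num
        rw [hsplit]
        exact mul_le_mul_of_nonneg_right hmono (sq_nonneg X)
      have := h2 hX1
      nlinarith [mul_le_mul_of_nonneg_left key hc.le]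
  · intro hMX
    exact h2 (le_trans hM hMX)
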